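/- If a closed Φ-term t is canonical and t rewrites in one step to u in Φ, then ⟦t⟧ →v ⟦u⟧, i.e., the readbacks are related by one step of weak call-by-value reduction. -/

import Mathlib

/-- Untyped λ-terms over variables drawn from ℕ (a denumerable totally ordered set). -/
inductive Lam : Type
  | var : ℕ → Lam
  | lam : ℕ → Lam → Lam
  | app : Lam → Lam → Lam
deriving DecidableEq, Repr

namespace Lam

/-- Capture-permitting substitution M{N/x} (adequate for weak reduction of closed terms). -/
def subst : Lam → ℕ → Lam → Lam
  | var y, x, N => if y = x then N else var y
  | lam y M, x, N => if y = x then lam y M else lam y (subst M x N)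
  | app M₁ M₂, x, N => app (subst M₁ x N) (subst M₂ x N)

/-- Simultaneous substitution along a partial assignment of terms to variables. -/
def msubst : Lam → (ℕ → Option Lam) → Lam
  | var y, σ => (σ y).getD (var y)
  | lam y M, σ => lam y (msubst M (fun z => if z = y then none else σ z))
  | app M₁ M₂, σ => app (msubst M₁ σ) (msubst M₂ σ)

/-- The assignment sending each `xᵢ` to `tᵢ` (first match wins). -/
def substOf (xs : List ℕ) (ts : List Lam) : ℕ → Option Lam :=
  fun y => (xs.zip ts).lookup y

/-- Values: variables and abstractions. -/
def IsValue : Lam → Prop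
  | var _ => True
  | lam _ _ => True
  | app _ _ => False

/-- Weak call-by-value reduction. -/
inductive CbvStep : Lam → Lam → Prop
  | beta {x : ℕ} {M V : Lam} : IsValue V → CbvStep (app (lam x M) V) (subst M x V)
  | appL {M N L : Lam} : CbvStep M N → CbvStep (app M L) (app N L)
  | appR {M N L : Lam} : CbvStep M N → CbvStep (app L M) (app L N)

/-- A →v-normal form. -/
def CbvNormal (M : Lam) : Prop := ¬ ∃ N, CbvStep M N

/-- Free variables, as a finite set. -/
def fv : Lam → Finset ℕ
  | var x => {x}
  | lam x M => fv M \ {x}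
  | app M N => fv M ∪ fv N

/-- The sequence (without repetitions, in variable order) of free variables of `M`. -/
def fvList (M : Lam) : List ℕ := (fv M).sort (· ≤ ·)

def Closed (M : Lam) : Prop := fv M = ∅

/-- The size |M| of a λ-term. -/
def size : Lam → ℕ
  | var _ => 1
  | lam _ M => size M + 1
  | app M N => size M + size N + 1

end Lam

/-- `NSteps r n a b`: `a` reduces to `b` in exactly `n` `r`-steps. -/
def NSteps {α : Type*} (r : α → α → Prop) : ℕ → α → α → Prop
  | 0 => fun a b => a = b
  | n + 1 => fun a c => ∃ b, r a b ∧ NSteps r n b c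

/-- Terms of the constructor rewrite system Φ: variables, the binary function symbol
`app`, and for every λ-term `M` and variable `x` a constructor `c_{x,M}` (here `con x M`),
whose arity is the length of `FV(λx.M)`. -/
inductive PTerm : Type
  | var : ℕ → PTerm
  | app : PTerm → PTerm → PTerm
  | con : ℕ → Lam → List PTerm → PTerm

namespace PTerm

/-- Well-formed Φ-terms: every constructor is applied to as many arguments as its arity. -/
inductive WF : PTerm → Prop
  | var {x} : WF (var x)
  | app {u v} : WF u → WF v → WF (app u v)
  | con {x M ts} : ts.length = (Lam.fvList (Lam.lam x M)).length →
      (∀ t ∈ ts, WF t) → WF (con x M ts)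

/-- Constructor terms: built only from constructors. -/
inductive IsConTerm : PTerm → Prop
  | con {x M ts} : (∀ t ∈ ts, IsConTerm t) → IsConTerm (con x M ts)

/-- Canonical closed Φ-terms. -/
inductive Canonical : PTerm → Prop
  | con {t} : IsConTerm t → Canonical t
  | app {u v} : Canonical u → Canonical v → Canonical (app u v)

/-- Closed Φ-terms contain no variables. -/
inductive ClosedP : PTerm → Prop
  | app {u v} : ClosedP u → ClosedP v → ClosedP (app u v)
  | con {x M ts} : (∀ t ∈ ts, ClosedP t) → ClosedP (con x M ts)

/-- Substitution of Φ-terms for variables. -/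
def psubst (σ : ℕ → Option PTerm) : PTerm → PTerm
  | var y => (σ y).getD (var y)
  | app u v => app (psubst σ u) (psubst σ v)
  | con x M ts => con x M (ts.attach.map (fun t => psubst σ t.1))
decreasing_by
  all_goals simp_wf
  all_goals try have := List.sizeOf_lt_of_mem t.2
  all_goals omega

/-- The assignment sending each `xᵢ` to `tᵢ`. -/
def substOfP (xs : List ℕ) (ts : List PTerm) : ℕ → Option PTerm :=
  fun y => (xs.zip ts).lookup y

/-- Variables occurring in a Φ-term. -/
def pvars : PTerm → List ℕ
  | var y => [y]
  | app u v => pvars u ++ pvars v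
  | con _ _ ts => ts.attach.flatMap (fun t => pvars t.1)
decreasing_by
  all_goals simp_wf
  all_goals try have := List.sizeOf_lt_of_mem t.2
  all_goals omega

end PTerm

/-- The translation ⟨·⟩ from λ-terms to Φ-terms. -/
def transPhi : Lam → PTerm
  | .var x => .var x
  | .lam x M => .con x M ((Lam.fvList (.lam x M)).map .var)
  | .app M N => .app (transPhi M) (transPhi N)

/-- The readback ⟦·⟧ from Φ-terms to λ-terms. -/
def readback : PTerm → Lam
  | .var x => .var x
  | .app u v => .app (readback u) (readback v)
  | .con x M ts =>
      Lam.msubst (.lam x M)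
        (Lam.substOf (Lam.fvList (.lam x M)) (ts.attach.map (fun t => readback t.1)))
decreasing_by
  all_goals simp_wf
  all_goals try have := List.sizeOf_lt_of_mem t.2
  all_goals omega

/-- One-step rewriting in Φ: the rule app(c_{x,M}(x₁,…,xₙ), x) → ⟨M⟩ (matched variables
instantiated by constructor terms), closed under arbitrary contexts. -/
inductive PhiStep : PTerm → PTerm → Prop
  | root {x : ℕ} {M : Lam} {ts : List PTerm} {v : PTerm} :
      (∀ t ∈ ts, PTerm.IsConTerm t) → PTerm.IsConTerm v →
      ts.length = (Lam.fvList (.lam x M)).length →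
      PhiStep (.app (.con x M ts) v)
        (PTerm.psubst (PTerm.substOfP (Lam.fvList (.lam x M) ++ [x]) (ts ++ [v])) (transPhi M))
  | appL {u u' v} : PhiStep u u' → PhiStep (.app u v) (.app u' v)
  | appR {u v v'} : PhiStep v v' → PhiStep (.app u v) (.app u v')
  | conArg {x M ts₁ t t' ts₂} : PhiStep t t' →
      PhiStep (.con x M (ts₁ ++ t :: ts₂)) (.con x M (ts₁ ++ t' :: ts₂))

/-- Φ-normal forms. -/
def PhiNormal (t : PTerm) : Prop := ¬ ∃ u, PhiStep t u


/-! ### Auxiliary lemmas -/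

section ListLemmas

theorem lookup_cons' {α β : Type*} [BEq α] (a k : α) (b : β) (l : List (α × β)) :
    ((k, b) :: l).lookup a = if a == k then some b else l.lookup a := by
  simp [List.lookup]; split <;> simp_all

theorem lookup_zip_map {α β : Type*} (xs : List ℕ) (ts : List α) (f : α → β) (y : ℕ) :
    (xs.zip (ts.map f)).lookup y = ((xs.zip ts).lookup y).map f := by
  induction xs generalizing ts with
  | nil => simp
  | cons a xs ih =>
    cases ts with
    | nil => simp
    | cons t ts =>
      simp only [List.map_cons, List.zip_cons_cons, lookup_cons']
      split <;> simp [ih]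

theorem lookup_zip_map_self {α : Type*} (xs : List ℕ) (g : ℕ → α) (y : ℕ) :
    (xs.zip (xs.map g)).lookup y = if y ∈ xs then some (g y) else none := by
  induction xs with
  | nil => simp
  | cons a xs ih =>
    simp only [List.map_cons, List.zip_cons_cons, lookup_cons', ih, List.mem_cons]
    by_cases h : y = a <;> simp [h]

theorem lookup_zip_none {α : Type*} {xs : List ℕ} (ts : List α) {y : ℕ} (h : y ∉ xs) :
    (xs.zip ts).lookup y = none := by
  induction xs generalizing ts with
  | nil => simp
  | cons a xs ih =>
    cases ts with
    | nil => simp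
    | cons t ts =>
      simp only [List.mem_cons, not_or] at h
      simp [List.zip_cons_cons, lookup_cons', h.1, ih ts h.2]

theorem lookup_zip_mem {α : Type*} {xs : List ℕ} {ts : List α} {y : ℕ} {b : α}
    (h : (xs.zip ts).lookup y = some b) : b ∈ ts := by
  induction xs generalizing ts with
  | nil => simp at h
  | cons a xs ih =>
    cases ts with
    | nil => simp at h
    | cons t ts =>
      rw [List.zip_cons_cons, lookup_cons'] at h
      split at h
      · simp_all
      · exact List.mem_cons_of_mem _ (ih h)

theorem lookup_zip_isSome {α : Type*} {xs : List ℕ} {ts : List α} {y : ℕ}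
    (hy : y ∈ xs) (hl : xs.length ≤ ts.length) : ∃ b ∈ ts, (xs.zip ts).lookup y = some b := by
  induction xs generalizing ts with
  | nil => simp at hy
  | cons a xs ih =>
    cases ts with
    | nil => simp at hl
    | cons t ts =>
      simp only [List.length_cons, Nat.succ_le_succ_iff] at hl
      rw [List.zip_cons_cons, lookup_cons']
      by_cases h : y = a
      · exact ⟨t, by simp, by simp [h]⟩
      · simp only [List.mem_cons, h, false_or] at hy
        obtain ⟨b, hb, hb2⟩ := ih hy hl
        exact ⟨b, List.mem_cons_of_mem _ hb, by simp [h, hb2]⟩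

theorem lookup_append' {α β : Type*} [BEq α] (a : α) (l₁ l₂ : List (α × β)) :
    (l₁ ++ l₂).lookup a = ((l₁.lookup a).or (l₂.lookup a)) := by
  induction l₁ with
  | nil => simp
  | cons p l ih =>
    obtain ⟨k, b⟩ := p
    rw [List.cons_append, lookup_cons', lookup_cons']
    split <;> simp [ih]

end ListLemmas

namespace Lam

theorem msubst_congr {M : Lam} {σ σ' : ℕ → Option Lam}
    (h : ∀ z ∈ fv M, (σ z).getD (var z) = (σ' z).getD (var z)) :
    msubst M σ = msubst M σ' := by
  induction M generalizing σ σ' with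
  | var y => exact h y (by simp [fv])
  | lam y N ih =>
    simp only [msubst]
    congr 1
    refine ih fun z hz => ?_
    by_cases hzy : z = y
    · simp [hzy]
    · simpa [hzy] using h z (by simp [fv, hz, hzy])
  | app M₁ M₂ ih₁ ih₂ =>
    simp only [msubst]
    rw [ih₁ fun z hz => h z (by simp [fv, hz]), ih₂ fun z hz => h z (by simp [fv, hz])]

theorem subst_of_not_mem_fv {t : Lam} {x : ℕ} {V : Lam} (h : x ∉ fv t) : subst t x V = t := by
  induction t with
  | var y => simp only [fv, Finset.mem_singleton] at h; simp [subst, Ne.symm h]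
  | lam y M ih =>
    by_cases hxy : y = x
    · simp [subst, hxy]
    · simp only [fv, Finset.mem_sdiff, Finset.mem_singleton, not_and, not_not] at h
      have : x ∉ fv M := fun hx => hxy (h hx).symm
      simp [subst, hxy, ih this]
  | app M₁ M₂ ih₁ ih₂ =>
    simp only [fv, Finset.mem_union, not_or] at h
    simp [subst, ih₁ h.1, ih₂ h.2]

theorem subst_msubst {M : Lam} {x : ℕ} {V : Lam} {σ : ℕ → Option Lam}
    (hx : σ x = none) (h : ∀ z ∈ fv M, ∀ t, σ z = some t → x ∉ fv t) :
    subst (msubst M σ) x V = msubst M (fun z => if z = x then some V else σ z) := by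
  induction M generalizing σ with
  | var y =>
    by_cases hyx : y = x
    · subst hyx; simp [msubst, hx, subst]
    · simp only [msubst, hyx, if_false]
      cases hσ : σ y with
      | none => simp [subst, hyx]
      | some t =>
        simp only [Option.getD_some]
        exact subst_of_not_mem_fv (h y (by simp [fv]) t hσ)
  | lam y N ih =>
    by_cases hyx : y = x
    · subst hyx
      have h1 : subst (msubst (lam y N) σ) y V = msubst (lam y N) σ := by
        simp [msubst, subst]
      rw [h1]
      simp only [msubst]
      congr 1
      apply msubst_congr
      intro z _
      by_cases hz : z = y <;> simp [hz]
    · simp only [msubst, subst, hyx, if_false]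
      congr 1
      rw [ih (by simp [hyx, hx]) ?_]
      · apply msubst_congr
        intro z hz
        by_cases hzy : z = y <;> by_cases hzx : z = x <;> simp_all
      · intro z hz t ht
        by_cases hzy : z = y
        · simp [hzy] at ht
        · simp only [hzy, if_false] at ht
          exact h z (by simp [fv, hz, hzy]) t ht
  | app M₁ M₂ ih₁ ih₂ =>
    simp only [msubst, subst]
    rw [ih₁ hx fun z hz => h z (by simp [fv, hz]),
        ih₂ hx fun z hz => h z (by simp [fv, hz])]

theorem fv_msubst_subset (M : Lam) (σ : ℕ → Option Lam) :
    fv (msubst M σ) ⊆ (fv M).biUnion (fun z => fv ((σ z).getD (var z))) := by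
  induction M generalizing σ with
  | var y => simp [msubst, fv]
  | lam y N ih =>
    intro w hw
    simp only [msubst, fv, Finset.mem_sdiff, Finset.mem_singleton] at hw
    obtain ⟨hw1, hw2⟩ := hw
    have := ih _ hw1
    simp only [Finset.mem_biUnion] at this ⊢
    obtain ⟨z, hz, hzw⟩ := this
    by_cases hzy : z = y
    · simp only [hzy, if_pos rfl, ↓reduceIte, Option.getD_none, fv, Finset.mem_singleton] at hzw
      exact absurd hzw hw2
    · simp only [hzy, if_false] at hzw
      exact ⟨z, by simp [fv, hz, hzy], hzw⟩
  | app M₁ M₂ ih₁ ih₂ =>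
    intro w hw
    simp only [msubst, fv, Finset.mem_union] at hw
    rw [Finset.mem_biUnion]
    rcases hw with hw | hw
    · obtain ⟨z, hz, hzw⟩ := Finset.mem_biUnion.mp (ih₁ _ hw)
      exact ⟨z, by simp [fv, hz], hzw⟩
    · obtain ⟨z, hz, hzw⟩ := Finset.mem_biUnion.mp (ih₂ _ hw)
      exact ⟨z, by simp [fv, hz], hzw⟩

theorem mem_fvList {M : Lam} {z : ℕ} : z ∈ fvList M ↔ z ∈ fv M := Finset.mem_sort _

end Lam

namespace PTerm

theorem psubst_con (σ : ℕ → Option PTerm) (x : ℕ) (M : Lam) (ts : List PTerm) :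
    psubst σ (con x M ts) = con x M (ts.map (psubst σ)) := by
  rw [psubst]
  simp

theorem isConTerm_no_step {t u : PTerm} (hstep : PhiStep t u) (h : IsConTerm t) : False := by
  induction hstep with
  | root _ _ _ => cases h
  | appL _ _ => cases h
  | appR _ _ => cases h
  | conArg _ ih =>
    cases h with
    | con hts => exact ih (hts _ (by simp))

end PTerm

theorem readback_con (x : ℕ) (M : Lam) (ts : List PTerm) :
    readback (.con x M ts) =
      Lam.msubst (.lam x M) (Lam.substOf (Lam.fvList (.lam x M)) (ts.map readback)) := by
  rw [readback]
  simp

theorem isValue_readback {t : PTerm} (h : PTerm.IsConTerm t) : Lam.IsValue (readback t) := by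
  cases h with
  | @con x M ts _ => rw [readback_con]; simp [Lam.msubst, Lam.IsValue]

theorem fv_readback_closed {t : PTerm} (hcl : PTerm.ClosedP t) (hwf : PTerm.WF t) :
    Lam.fv (readback t) = ∅ := by
  induction hcl with
  | app _ _ ih₁ ih₂ =>
    cases hwf with
    | app hw₁ hw₂ => simp [readback, Lam.fv, ih₁ hw₁, ih₂ hw₂]
  | @con x M ts _ ih =>
    cases hwf with
    | con hlen hwts =>
      rw [readback_con]
      refine Finset.eq_empty_of_forall_notMem fun w hw => ?_
      have := Lam.fv_msubst_subset _ _ hw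
      simp only [Finset.mem_biUnion] at this
      obtain ⟨z, hz, hzw⟩ := this
      have hz' : z ∈ Lam.fvList (.lam x M) := Lam.mem_fvList.mpr hz
      obtain ⟨b, hb, hlook⟩ := lookup_zip_isSome (ts := ts.map readback) hz'
        (by simp [hlen])
      rw [Lam.substOf] at hzw
      rw [hlook] at hzw
      simp only [Option.getD_some] at hzw
      obtain ⟨s, hs, rfl⟩ := List.mem_map.mp hb
      rw [ih s hs (hwts s hs)] at hzw
      simp at hzw

theorem readback_psubst_trans (M : Lam) (σ : ℕ → Option PTerm) :
    readback (PTerm.psubst σ (transPhi M)) = Lam.msubst M (fun y => (σ y).map readback) := by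
  induction M generalizing σ with
  | var y =>
    simp only [transPhi, PTerm.psubst, Lam.msubst]
    cases σ y <;> simp [readback]
  | lam y N ih =>
    simp only [transPhi, PTerm.psubst_con, readback_con, List.map_map]
    have hmap : (Lam.fvList (Lam.lam y N)).map (readback ∘ PTerm.psubst σ ∘ PTerm.var)
        = (Lam.fvList (Lam.lam y N)).map (fun z => readback ((σ z).getD (PTerm.var z))) := by
      refine List.map_congr_left fun z _ => ?_
      simp [PTerm.psubst]
    rw [hmap]
    apply Lam.msubst_congr
    intro z hz
    rw [Lam.substOf, lookup_zip_map_self]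
    have hz' : z ∈ Lam.fvList (Lam.lam y N) := Lam.mem_fvList.mpr hz
    simp only [hz', if_pos]
    cases σ z <;> simp [readback]
  | app M₁ M₂ ih₁ ih₂ =>
    simp [transPhi, PTerm.psubst, readback, Lam.msubst, ih₁, ih₂]

/-- If a closed canonical Φ-term t rewrites in one step to u, then ⟦t⟧ →v ⟦u⟧. -/
theorem phiStep_readback (t u : PTerm) (hwf : PTerm.WF t) (hcl : PTerm.ClosedP t)
    (hcan : PTerm.Canonical t) (hstep : PhiStep t u) :
    Lam.CbvStep (readback t) (readback u) := by
  revert hwf hcl hcan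
  induction hstep with
  | @root x M ts v hts hv hlen =>
    intro hwf hcl _
    have hxlen : ts.length = (Lam.fvList (.lam x M)).length := hlen
    -- decompose wf/closed
    have hwts : ∀ t ∈ ts, PTerm.WF t := by
      cases hwf with | app h1 h2 => cases h1 with | con _ h => exact h
    have hwv : PTerm.WF v := by cases hwf with | app h1 h2 => exact h2
    have hcts : ∀ t ∈ ts, PTerm.ClosedP t := by
      cases hcl with | app h1 h2 => cases h1 with | con h => exact h
    have hcv : PTerm.ClosedP v := by cases hcl with | app h1 h2 => exact h2
    set xs := Lam.fvList (.lam x M) with hxs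
    have hxnot : x ∉ xs := by
      rw [hxs, Lam.mem_fvList]
      simp [Lam.fv]
    rw [readback, readback_con, readback_psubst_trans]
    have hmsub : Lam.msubst (Lam.lam x M) (Lam.substOf xs (ts.map readback))
        = Lam.lam x (Lam.msubst M
            (fun z => if z = x then none else Lam.substOf xs (ts.map readback) z)) := rfl
    rw [hmsub]
    have hσx : (fun z => if z = x then none else Lam.substOf xs (ts.map readback) z) x
        = none := by simp
    have hσfv : ∀ z ∈ Lam.fv M, ∀ w,
        (fun z => if z = x then none else Lam.substOf xs (ts.map readback) z) z = some w →
        x ∉ Lam.fv w := by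
      intro z _ w hw
      by_cases hzx : z = x
      · simp [hzx] at hw
      · simp only [hzx, if_false] at hw
        have hmem : w ∈ ts.map readback := lookup_zip_mem hw
        obtain ⟨s, hs, rfl⟩ := List.mem_map.mp hmem
        rw [fv_readback_closed (hcts s hs) (hwts s hs)]
        simp
    have hbeta := Lam.CbvStep.beta (x := x)
      (M := Lam.msubst M (fun z => if z = x then none else Lam.substOf xs (ts.map readback) z))
      (V := readback v) (isValue_readback hv)
    rw [Lam.subst_msubst hσx hσfv] at hbeta
    have hfun : (fun z => if z = x then some (readback v)
          else if z = x then none else Lam.substOf xs (ts.map readback) z)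
        = (fun y => ((PTerm.substOfP (xs ++ [x]) (ts ++ [v])) y).map readback) := by
      funext z
      rw [PTerm.substOfP]
      have hzip : (xs ++ [x]).zip (ts ++ [v]) = xs.zip ts ++ [(x, v)] := by
        rw [List.zip_append (by omega)]
        rfl
      rw [hzip, lookup_append']
      by_cases hzx : z = x
      · subst hzx
        rw [lookup_zip_none ts hxnot]
        simp [lookup_cons']
      · simp only [hzx, if_false]
        have : ([(x, v)] : List (ℕ × PTerm)).lookup z = none := by
          simp [lookup_cons', hzx]
        rw [this, Option.or_none, Lam.substOf, lookup_zip_map]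
    rw [hfun] at hbeta
    exact hbeta
  | appL h ih =>
    intro hwf hcl hcan
    cases hwf with | app hw1 hw2 =>
    cases hcl with | app hc1 hc2 =>
    cases hcan with
    | con hct => cases hct
    | app hn1 hn2 =>
      rw [readback, readback]
      exact Lam.CbvStep.appL (ih hw1 hc1 hn1)
  | appR h ih =>
    intro hwf hcl hcan
    cases hwf with | app hw1 hw2 =>
    cases hcl with | app hc1 hc2 =>
    cases hcan with
    | con hct => cases hct
    | app hn1 hn2 =>
      rw [readback, readback]
      exact Lam.CbvStep.appR (ih hw2 hc2 hn2)
  | conArg h _ =>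
    intro _ _ hcan
    exfalso
    cases hcan with
    | con hct =>
      cases hct with
      | con hts => exact PTerm.isConTerm_no_step h (hts _ (by simp))
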